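/- Let M, k, l_n be positive integers, let β, γ > 0, let E : ℝ^M → ℝ be twice continuously differentiable with F(x) = −∇E(x) and H(x) = ∇²E(x), and let v̄_1, …, v̄_{l_n} ∈ ℝ^M be a fixed orthonormal family. Suppose φ : [0,∞) → ℝ^M and v_1, …, v_k : [0,∞) → ℝ^M are continuously differentiable and satisfy, for all t ≥ 0, the unconstrained nullspace-preserving high-index saddle dynamics: φ'(t) = β ( F(φ(t)) − 2 Σ_{i=1}^k ⟨v_i(t), F(φ(t))⟩ v_i(t) ) and, for each 1 ≤ i ≤ k, v_i'(t) = −γ ( H(φ(t)) v_i(t) − ⟨v_i(t), H(φ(t)) v_i(t)⟩ v_i(t) − 2 Σ_{j=1}^{i−1} ⟨v_j(t), H(φ(t)) v_i(t)⟩ v_j(t) − Σ_{l=1}^{l_n} ⟨v̄_l, H(φ(t)) v_i(t)⟩ v̄_l ). If the initial values satisfy ⟨v_i(0), v_j(0)⟩ = δ_{ij} for all 1 ≤ i, j ≤ k and ⟨v_i(0), v̄_l⟩ = 0 for all 1 ≤ i ≤ k, 1 ≤ l ≤ l_n, then for every t ≥ 0 one has ⟨v_i(t), v_j(t)⟩ =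 δ_{ij} for all 1 ≤ i, j ≤ k and ⟨v_i(t), v̄_l⟩ = 0 for all 1 ≤ i ≤ k, 1 ≤ l ≤ l_n. -/

import Mathlib

open scoped RealInnerProductSpace BigOperators

section Aux
open Finset

variable {E : Type*} [NormedAddCommGroup E] [InnerProductSpace ℝ E]

private lemma nphisd_hessian_symm {M : ℕ} (En : EuclideanSpace ℝ (Fin M) → ℝ)
    (hEn : ContDiff ℝ 2 En) (x u w : EuclideanSpace ℝ (Fin M)) :
    ⟪(fderiv ℝ (gradient En) x) u, w⟫ = ⟪u, (fderiv ℝ (gradient En) x) w⟫ := by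
  classical
  have hd2 : ContDiff ℝ 1 (fderiv ℝ En) := hEn.fderiv_right (by norm_num)
  set e := (InnerProductSpace.toDual ℝ (EuclideanSpace ℝ (Fin M))).symm with he
  set c : StrongDual ℝ (EuclideanSpace ℝ (Fin M)) →L[ℝ] EuclideanSpace ℝ (Fin M) :=
    e.toContinuousLinearEquiv.toContinuousLinearMap with hc
  have h1 : HasFDerivAt (fderiv ℝ En) (fderiv ℝ (fderiv ℝ En) x) x :=
    ((hd2.differentiable one_ne_zero) x).hasFDerivAt
  have h2 : HasFDerivAt (gradient En) (c.comp (fderiv ℝ (fderiv ℝ En) x)) x :=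
    c.hasFDerivAt.comp x h1
  have key : ∀ z, (fderiv ℝ (gradient En) x) z = e (fderiv ℝ (fderiv ℝ En) x z) := by
    intro z
    rw [h2.fderiv]
    rfl
  have hsymm : ∀ z z', fderiv ℝ (fderiv ℝ En) x z z' = fderiv ℝ (fderiv ℝ En) x z' z :=
    fun z z' => (hEn.contDiffAt.isSymmSndFDerivAt (by norm_num)) z z'
  rw [key, key, InnerProductSpace.toDual_symm_apply, real_inner_comm,
    InnerProductSpace.toDual_symm_apply, hsymm]

private lemma nphisd_hessian_cont {M : ℕ} (En : EuclideanSpace ℝ (Fin M) → ℝ)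
    (hEn : ContDiff ℝ 2 En) : Continuous (fun x => fderiv ℝ (gradient En) x) := by
  have hd2 : ContDiff ℝ 1 (fderiv ℝ En) := hEn.fderiv_right (by norm_num)
  set c : StrongDual ℝ (EuclideanSpace ℝ (Fin M)) →L[ℝ] EuclideanSpace ℝ (Fin M) :=
    (InnerProductSpace.toDual ℝ (EuclideanSpace ℝ (Fin M))).symm.toContinuousLinearEquiv.toContinuousLinearMap with hc
  have hg : ContDiff ℝ 1 (gradient En) := by
    have : ContDiff ℝ 1 (fun y => c (fderiv ℝ En y)) := c.contDiff.comp hd2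
    exact this
  exact hg.continuous_fderiv one_ne_zero

private lemma nphisd_inner_V {k ln : ℕ} (γ : ℝ) (A : E →L[ℝ] E) (vt : Fin k → E)
    (vb : Fin ln → E) (i : Fin k) (w : E) :
    ⟪-(γ • (A (vt i) - ⟪vt i, A (vt i)⟫ • vt i
      - (2:ℝ) • ∑ j ∈ Finset.univ.filter (fun j => j < i), ⟪vt j, A (vt i)⟫ • vt j
      - ∑ l, ⟪vb l, A (vt i)⟫ • vb l)), w⟫
    = -(γ * (⟪A (vt i), w⟫ - ⟪vt i, A (vt i)⟫ * ⟪vt i, w⟫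
      - 2 * ∑ j ∈ Finset.univ.filter (fun j => j < i), ⟪vt j, A (vt i)⟫ * ⟪vt j, w⟫
      - ∑ l, ⟪vb l, A (vt i)⟫ * ⟪vb l, w⟫)) := by
  simp [inner_sub_left, inner_smul_left, sum_inner, inner_neg_left, Finset.mul_sum]

private lemma nphisd_inner_V' {k ln : ℕ} (γ : ℝ) (A : E →L[ℝ] E) (vt : Fin k → E)
    (vb : Fin ln → E) (i : Fin k) (w : E) :
    ⟪w, -(γ • (A (vt i) - ⟪vt i, A (vt i)⟫ • vt i
      - (2:ℝ) • ∑ j ∈ Finset.univ.filter (fun j => j < i), ⟪vt j, A (vt i)⟫ • vt j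
      - ∑ l, ⟪vb l, A (vt i)⟫ • vb l))⟫
    = -(γ * (⟪A (vt i), w⟫ - ⟪vt i, A (vt i)⟫ * ⟪vt i, w⟫
      - 2 * ∑ j ∈ Finset.univ.filter (fun j => j < i), ⟪vt j, A (vt i)⟫ * ⟪vt j, w⟫
      - ∑ l, ⟪vb l, A (vt i)⟫ * ⟪vb l, w⟫)) := by
  rw [real_inner_comm]; exact nphisd_inner_V γ A vt vb i w

private lemma nphisd_id2 {k ln : ℕ} (γ : ℝ) (A : E →L[ℝ] E) (vt : Fin k → E)
    (vb : Fin ln → E) (hvb : Orthonormal ℝ vb) (i : Fin k) (l : Fin ln) :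
    ⟪-(γ • (A (vt i) - ⟪vt i, A (vt i)⟫ • vt i
      - (2:ℝ) • ∑ j ∈ Finset.univ.filter (fun j => j < i), ⟪vt j, A (vt i)⟫ • vt j
      - ∑ m, ⟪vb m, A (vt i)⟫ • vb m)), vb l⟫
    = γ * (⟪vt i, A (vt i)⟫ * ⟪vt i, vb l⟫
      + 2 * ∑ j ∈ Finset.univ.filter (fun j => j < i), ⟪vt j, A (vt i)⟫ * ⟪vt j, vb l⟫) := by
  rw [nphisd_inner_V]
  have horto : ∀ m l' : Fin ln, ⟪vb m, vb l'⟫ = if m = l' then 1 else 0 :=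
    orthonormal_iff_ite.mp hvb
  have h1 : ⟪A (vt i), vb l⟫ = ⟪vb l, A (vt i)⟫ := real_inner_comm _ _
  have h2 : ∑ m, ⟪vb m, A (vt i)⟫ * ⟪vb m, vb l⟫ = ⟪vb l, A (vt i)⟫ := by
    simp [horto, mul_ite, Finset.sum_ite_eq']
  rw [h1, h2]; ring

private lemma nphisd_id1 {k ln : ℕ} (γ : ℝ) (A : E →L[ℝ] E)
    (hsym : ∀ u w : E, ⟪A u, w⟫ = ⟪u, A w⟫)
    (vt : Fin k → E) (vb : Fin ln → E) (i j : Fin k) :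
    ⟪vt i, -(γ • (A (vt j) - ⟪vt j, A (vt j)⟫ • vt j
      - (2:ℝ) • ∑ p ∈ Finset.univ.filter (fun p => p < j), ⟪vt p, A (vt j)⟫ • vt p
      - ∑ l, ⟪vb l, A (vt j)⟫ • vb l))⟫
    + ⟪-(γ • (A (vt i) - ⟪vt i, A (vt i)⟫ • vt i
      - (2:ℝ) • ∑ p ∈ Finset.univ.filter (fun p => p < i), ⟪vt p, A (vt i)⟫ • vt p
      - ∑ l, ⟪vb l, A (vt i)⟫ • vb l)), vt j⟫
    = γ * ((⟪vt i, A (vt i)⟫ + ⟪vt j, A (vt j)⟫) * (⟪vt i, vt j⟫ - (if i = j then 1 else 0))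
      + 2 * ∑ p ∈ Finset.univ.filter (fun p => p < i),
          ⟪vt p, A (vt i)⟫ * (⟪vt p, vt j⟫ - (if p = j then 1 else 0))
      + 2 * ∑ p ∈ Finset.univ.filter (fun p => p < j),
          ⟪vt p, A (vt j)⟫ * (⟪vt p, vt i⟫ - (if p = i then 1 else 0))
      + ∑ l, ⟪vb l, A (vt i)⟫ * ⟪vb l, vt j⟫
      + ∑ l, ⟪vb l, A (vt j)⟫ * ⟪vb l, vt i⟫) := by
  classical
  rw [nphisd_inner_V' γ A vt vb j (vt i), nphisd_inner_V γ A vt vb i (vt j)]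
  have hsplit : ∀ (q r : Fin k),
      ∑ p ∈ Finset.univ.filter (fun p => p < q), ⟪vt p, A (vt q)⟫
          * (⟪vt p, vt r⟫ - (if p = r then 1 else 0))
      = (∑ p ∈ Finset.univ.filter (fun p => p < q), ⟪vt p, A (vt q)⟫ * ⟪vt p, vt r⟫)
        - (if r < q then ⟪vt r, A (vt q)⟫ else 0) := by
    intro q r
    simp only [mul_sub]
    rw [Finset.sum_sub_distrib]
    congr 1
    simp [mul_ite, Finset.sum_ite_eq']
  rw [hsplit i j, hsplit j i]
  have h1 : ⟪vt j, vt i⟫ = ⟪vt i, vt j⟫ := real_inner_comm _ _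
  have h2 : ⟪A (vt j), vt i⟫ = ⟪vt i, A (vt j)⟫ := real_inner_comm _ _
  have h3 : ⟪A (vt i), vt j⟫ = ⟪vt i, A (vt j)⟫ := hsym _ _
  have h4 : ⟪vt j, A (vt i)⟫ = ⟪vt i, A (vt j)⟫ := by
    rw [real_inner_comm, hsym]
  rw [h1, h2, h3]
  rcases lt_trichotomy i j with h | h | h
  · simp only [if_neg (ne_of_lt h), if_neg (asymm h : ¬ j < i), if_pos h]
    ring
  · subst h
    simp only [if_neg (lt_irrefl i), eq_self_iff_true, if_true]
    ring
  · simp only [if_neg (ne_of_gt h), if_pos h, if_neg (asymm h : ¬ i < j)]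
    rw [h4]
    ring

end Aux

/-- Structure preservation of the unconstrained nullspace-preserving
high-index saddle dynamics (NPHiSD): orthonormality of the ascent directions
and their orthogonality to the fixed nullspace basis are preserved in time. -/
theorem nphisd_unconstrained_structure_preservation
    (M k ln : ℕ) (hM : 0 < M) (hk : 0 < k) (hln : 0 < ln)
    (β γ : ℝ) (hβ : 0 < β) (hγ : 0 < γ)
    (En : EuclideanSpace ℝ (Fin M) → ℝ) (hEn : ContDiff ℝ 2 En)
    (F : EuclideanSpace ℝ (Fin M) → EuclideanSpace ℝ (Fin M))
    (hF : ∀ x, F x = -gradient En x)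
    (H : EuclideanSpace ℝ (Fin M) → EuclideanSpace ℝ (Fin M) →L[ℝ] EuclideanSpace ℝ (Fin M))
    (hH : ∀ x, H x = fderiv ℝ (gradient En) x)
    (vbar : Fin ln → EuclideanSpace ℝ (Fin M)) (hvbar : Orthonormal ℝ vbar)
    (φ : ℝ → EuclideanSpace ℝ (Fin M)) (v : Fin k → ℝ → EuclideanSpace ℝ (Fin M))
    (hφ : ∀ t ≥ (0:ℝ), HasDerivWithinAt φ
      (β • (F (φ t) - (2:ℝ) • ∑ i, ⟪v i t, F (φ t)⟫ • v i t)) (Set.Ici 0) t)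
    (hv : ∀ t ≥ (0:ℝ), ∀ i : Fin k, HasDerivWithinAt (v i)
      (-(γ • ((H (φ t)) (v i t) - ⟪v i t, (H (φ t)) (v i t)⟫ • v i t
        - (2:ℝ) • ∑ j ∈ Finset.univ.filter (fun j => j < i),
            ⟪v j t, (H (φ t)) (v i t)⟫ • v j t
        - ∑ l, ⟪vbar l, (H (φ t)) (v i t)⟫ • vbar l))) (Set.Ici 0) t)
    (hinit1 : ∀ i j : Fin k, ⟪v i 0, v j 0⟫ = if i = j then 1 else 0)
    (hinit2 : ∀ (i : Fin k) (l : Fin ln), ⟪v i 0, vbar l⟫ = 0) :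
    ∀ t ≥ (0:ℝ),
      (∀ i j : Fin k, ⟪v i t, v j t⟫ = if i = j then 1 else 0)
      ∧ (∀ (i : Fin k) (l : Fin ln), ⟪v i t, vbar l⟫ = 0) := by
  classical
  intro T hT
  have hHsym : ∀ x (u w : EuclideanSpace ℝ (Fin M)), ⟪(H x) u, w⟫ = ⟪u, (H x) w⟫ := by
    intro x u w; rw [hH]; exact nphisd_hessian_symm En hEn x u w
  have hHcont : Continuous H := by
    have : H = fun x => fderiv ℝ (gradient En) x := funext hH
    rw [this]; exact nphisd_hessian_cont En hEn
  set V : Fin k → ℝ → EuclideanSpace ℝ (Fin M) := fun i t =>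
    -(γ • ((H (φ t)) (v i t) - ⟪v i t, (H (φ t)) (v i t)⟫ • v i t
      - (2:ℝ) • ∑ j ∈ Finset.univ.filter (fun j => j < i),
          ⟪v j t, (H (φ t)) (v i t)⟫ • v j t
      - ∑ l, ⟪vbar l, (H (φ t)) (v i t)⟫ • vbar l)) with hVdef
  have hvV : ∀ t ≥ (0:ℝ), ∀ i, HasDerivWithinAt (v i) (V i t) (Set.Ici 0) t := hv
  set f : ℝ → (Fin k → Fin k → ℝ) × (Fin k → Fin ln → ℝ) := fun t =>
    (fun i j => ⟪v i t, v j t⟫ - (if i = j then 1 else 0),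
     fun i l => ⟪v i t, vbar l⟫) with hfdef
  set f' : ℝ → (Fin k → Fin k → ℝ) × (Fin k → Fin ln → ℝ) := fun t =>
    (fun i j => ⟪v i t, V j t⟫ + ⟪V i t, v j t⟫,
     fun i l => ⟪V i t, vbar l⟫) with hf'def
  -- continuity facts
  have hvcont : ∀ i, ContinuousOn (v i) (Set.Icc 0 T) := fun i t ht =>
    ((hvV t ht.1 i).continuousWithinAt).mono Set.Icc_subset_Ici_self
  have hφcont : ContinuousOn φ (Set.Icc 0 T) := fun t ht =>
    ((hφ t ht.1).continuousWithinAt).mono Set.Icc_subset_Ici_self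
  have hAcont : ContinuousOn (fun t => H (φ t)) (Set.Icc 0 T) :=
    hHcont.comp_continuousOn hφcont
  -- bounds on the coefficients
  obtain ⟨C1, hC1⟩ := isCompact_Icc.exists_bound_of_continuousOn hAcont
  have hvPi : ContinuousOn (fun t => (fun i => v i t : Fin k → EuclideanSpace ℝ (Fin M)))
      (Set.Icc 0 T) := continuousOn_pi.2 fun i => hvcont i
  obtain ⟨C2, hC2⟩ := isCompact_Icc.exists_bound_of_continuousOn hvPi
  set c1 : ℝ := max C1 0 with hc1def
  set c2 : ℝ := max C2 1 with hc2def
  have hc10 : 0 ≤ c1 := le_max_right _ _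
  have hc21 : 1 ≤ c2 := le_max_right _ _
  have hc20 : 0 ≤ c2 := zero_le_one.trans hc21
  have hA1 : ∀ t ∈ Set.Icc (0:ℝ) T, ‖H (φ t)‖ ≤ c1 := fun t ht =>
    (hC1 t ht).trans (le_max_left _ _)
  have hv2 : ∀ (i : Fin k), ∀ t ∈ Set.Icc (0:ℝ) T, ‖v i t‖ ≤ c2 := fun i t ht =>
    (norm_le_pi_norm (fun i => v i t) i).trans ((hC2 t ht).trans (le_max_left _ _))
  set D : ℝ := c2 * (c1 * c2) with hDdef
  have hD0 : 0 ≤ D := by positivity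
  have hbD : ∀ t ∈ Set.Icc (0:ℝ) T, ∀ i j : Fin k,
      |⟪v i t, (H (φ t)) (v j t)⟫| ≤ D := by
    intro t ht i j
    calc |⟪v i t, (H (φ t)) (v j t)⟫| ≤ ‖v i t‖ * ‖(H (φ t)) (v j t)‖ :=
          abs_real_inner_le_norm _ _
      _ ≤ c2 * (c1 * c2) := by
          apply mul_le_mul (hv2 i t ht) ?_ (norm_nonneg _) hc20
          calc ‖(H (φ t)) (v j t)‖ ≤ ‖H (φ t)‖ * ‖v j t‖ :=
                ContinuousLinearMap.le_opNorm _ _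
            _ ≤ c1 * c2 := mul_le_mul (hA1 t ht) (hv2 j t ht) (norm_nonneg _) hc10
  have hcD : ∀ t ∈ Set.Icc (0:ℝ) T, ∀ (l : Fin ln) (i : Fin k),
      |⟪vbar l, (H (φ t)) (v i t)⟫| ≤ D := by
    intro t ht l i
    calc |⟪vbar l, (H (φ t)) (v i t)⟫| ≤ ‖vbar l‖ * ‖(H (φ t)) (v i t)‖ :=
          abs_real_inner_le_norm _ _
      _ = ‖(H (φ t)) (v i t)‖ := by rw [hvbar.1 l, one_mul]
      _ ≤ c1 * c2 := by
          calc ‖(H (φ t)) (v i t)‖ ≤ ‖H (φ t)‖ * ‖v i t‖ :=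
                ContinuousLinearMap.le_opNorm _ _
            _ ≤ c1 * c2 := mul_le_mul (hA1 t ht) (hv2 i t ht) (norm_nonneg _) hc10
      _ ≤ c2 * (c1 * c2) := le_mul_of_one_le_left (by positivity) hc21
  set K : ℝ := γ * (D * (2 + 4 * (k:ℝ) + 2 * (ln:ℝ))) with hKdef
  have hK0 : 0 ≤ K := by positivity
  -- derivative of f
  have hfd : ∀ t ∈ Set.Ico (0:ℝ) T, HasDerivWithinAt f (f' t) (Set.Ici t) t := by
    intro t ht
    have ht0 : (0:ℝ) ≤ t := ht.1
    have hsub : Set.Ici t ⊆ Set.Ici (0:ℝ) := Set.Ici_subset_Ici.2 ht0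
    refine HasDerivWithinAt.prodMk ?_ ?_
    · rw [hasDerivWithinAt_pi]
      intro i
      rw [hasDerivWithinAt_pi]
      intro j
      exact (((hvV t ht0 i).mono hsub).inner ℝ ((hvV t ht0 j).mono hsub)).sub_const _
    · rw [hasDerivWithinAt_pi]
      intro i
      rw [hasDerivWithinAt_pi]
      intro l
      have := ((hvV t ht0 i).mono hsub).inner ℝ
        (hasDerivWithinAt_const t (Set.Ici t) (vbar l))
      simpa using this
  -- continuity of f
  have hfc : ContinuousOn f (Set.Icc 0 T) := by
    apply ContinuousOn.prodMk
    · exact continuousOn_pi.2 fun i => continuousOn_pi.2 fun j =>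
        ((hvcont i).inner (hvcont j)).sub continuousOn_const
    · exact continuousOn_pi.2 fun i => continuousOn_pi.2 fun l =>
        (hvcont i).inner continuousOn_const
  -- initial value
  have hf0 : ‖f 0‖ ≤ 0 := by
    have hz : f 0 = 0 := by
      rw [hfdef]
      refine Prod.ext ?_ ?_
      · funext i j; simp [hinit1 i j]
      · funext i l; simp [hinit2 i l]
    rw [hz, norm_zero]
  -- the Gronwall bound hypothesis
  have hbound : ∀ t ∈ Set.Ico (0:ℝ) T, ‖f' t‖ ≤ K * ‖f t‖ + 0 := by
    intro t ht
    have htI : t ∈ Set.Icc (0:ℝ) T := ⟨ht.1, le_of_lt ht.2⟩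
    rw [add_zero]
    set N := ‖f t‖ with hN
    have hN0 : 0 ≤ N := norm_nonneg _
    have hKN : 0 ≤ K * N := mul_nonneg hK0 hN0
    have hDN0 : 0 ≤ D * N := mul_nonneg hD0 hN0
    have hyb : ∀ p q : Fin k, |⟪v p t, v q t⟫ - (if p = q then 1 else 0)| ≤ N := by
      intro p q
      have h1 : |(f t).1 p q| ≤ ‖(f t).1 p‖ := by
        simpa [Real.norm_eq_abs] using norm_le_pi_norm ((f t).1 p) q
      have h2 : ‖(f t).1 p‖ ≤ ‖(f t).1‖ := norm_le_pi_norm ((f t).1) p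
      have h3 : ‖(f t).1‖ ≤ N := norm_fst_le (f t)
      exact h1.trans (h2.trans h3)
    have hzb : ∀ (q : Fin k) (l : Fin ln), |⟪v q t, vbar l⟫| ≤ N := by
      intro q l
      have h1 : |(f t).2 q l| ≤ ‖(f t).2 q‖ := by
        simpa [Real.norm_eq_abs] using norm_le_pi_norm ((f t).2 q) l
      have h2 : ‖(f t).2 q‖ ≤ ‖(f t).2‖ := norm_le_pi_norm ((f t).2) q
      have h3 : ‖(f t).2‖ ≤ N := norm_snd_le (f t)
      exact h1.trans (h2.trans h3)
    have hzb' : ∀ (q : Fin k) (l : Fin ln), |⟪vbar l, v q t⟫| ≤ N := by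
      intro q l; rw [real_inner_comm]; exact hzb q l
    have hcard : ∀ q : Fin k, ((Finset.univ.filter (fun p => p < q)).card : ℝ) ≤ (k:ℝ) := by
      intro q
      have : (Finset.univ.filter (fun p => p < q)).card ≤ k :=
        le_trans (Finset.card_filter_le _ _) (by simp)
      exact_mod_cast this
    have hsum_b : ∀ (q r : Fin k),
        |∑ p ∈ Finset.univ.filter (fun p => p < q),
            ⟪v p t, (H (φ t)) (v q t)⟫ * (⟪v p t, v r t⟫ - (if p = r then 1 else 0))|
          ≤ (k:ℝ) * (D * N) := by
      intro q r
      calc |∑ p ∈ Finset.univ.filter (fun p => p < q),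
              ⟪v p t, (H (φ t)) (v q t)⟫ * (⟪v p t, v r t⟫ - (if p = r then 1 else 0))|
          ≤ ∑ p ∈ Finset.univ.filter (fun p => p < q),
              |⟪v p t, (H (φ t)) (v q t)⟫ * (⟪v p t, v r t⟫ - (if p = r then 1 else 0))| :=
            Finset.abs_sum_le_sum_abs _ _
        _ ≤ ∑ _p ∈ Finset.univ.filter (fun p => p < q), D * N := by
            refine Finset.sum_le_sum fun p _ => ?_
            rw [abs_mul]
            exact mul_le_mul (hbD t htI p q) (hyb p r) (abs_nonneg _) hD0
        _ = ((Finset.univ.filter (fun p => p < q)).card : ℝ) * (D * N) := by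
            rw [Finset.sum_const, nsmul_eq_mul]
        _ ≤ (k:ℝ) * (D * N) := mul_le_mul_of_nonneg_right (hcard q) hDN0
    have hsum_bz : ∀ (q : Fin k) (l' : Fin ln),
        |∑ p ∈ Finset.univ.filter (fun p => p < q),
            ⟪v p t, (H (φ t)) (v q t)⟫ * ⟪v p t, vbar l'⟫| ≤ (k:ℝ) * (D * N) := by
      intro q l'
      calc |∑ p ∈ Finset.univ.filter (fun p => p < q),
              ⟪v p t, (H (φ t)) (v q t)⟫ * ⟪v p t, vbar l'⟫|
          ≤ ∑ p ∈ Finset.univ.filter (fun p => p < q),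
              |⟪v p t, (H (φ t)) (v q t)⟫ * ⟪v p t, vbar l'⟫| :=
            Finset.abs_sum_le_sum_abs _ _
        _ ≤ ∑ _p ∈ Finset.univ.filter (fun p => p < q), D * N := by
            refine Finset.sum_le_sum fun p _ => ?_
            rw [abs_mul]
            exact mul_le_mul (hbD t htI p q) (hzb p l') (abs_nonneg _) hD0
        _ = ((Finset.univ.filter (fun p => p < q)).card : ℝ) * (D * N) := by
            rw [Finset.sum_const, nsmul_eq_mul]
        _ ≤ (k:ℝ) * (D * N) := mul_le_mul_of_nonneg_right (hcard q) hDN0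
    have hsum_c : ∀ (q r : Fin k),
        |∑ l, ⟪vbar l, (H (φ t)) (v q t)⟫ * ⟪vbar l, v r t⟫| ≤ (ln:ℝ) * (D * N) := by
      intro q r
      calc |∑ l, ⟪vbar l, (H (φ t)) (v q t)⟫ * ⟪vbar l, v r t⟫|
          ≤ ∑ l, |⟪vbar l, (H (φ t)) (v q t)⟫ * ⟪vbar l, v r t⟫| :=
            Finset.abs_sum_le_sum_abs _ _
        _ ≤ ∑ _l : Fin ln, D * N := by
            refine Finset.sum_le_sum fun l _ => ?_
            rw [abs_mul]
            exact mul_le_mul (hcD t htI l q) (hzb' r l) (abs_nonneg _) hD0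
        _ = (ln:ℝ) * (D * N) := by
            rw [Finset.sum_const, nsmul_eq_mul, Finset.card_univ, Fintype.card_fin]
    rw [Prod.norm_def]
    apply max_le
    · rw [pi_norm_le_iff_of_nonneg hKN]
      intro i
      rw [pi_norm_le_iff_of_nonneg hKN]
      intro j
      rw [Real.norm_eq_abs]
      have hid : (f' t).1 i j =
          γ * ((⟪v i t, (H (φ t)) (v i t)⟫ + ⟪v j t, (H (φ t)) (v j t)⟫)
                * (⟪v i t, v j t⟫ - (if i = j then 1 else 0))
            + 2 * ∑ p ∈ Finset.univ.filter (fun p => p < i),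
                ⟪v p t, (H (φ t)) (v i t)⟫ * (⟪v p t, v j t⟫ - (if p = j then 1 else 0))
            + 2 * ∑ p ∈ Finset.univ.filter (fun p => p < j),
                ⟪v p t, (H (φ t)) (v j t)⟫ * (⟪v p t, v i t⟫ - (if p = i then 1 else 0))
            + ∑ l, ⟪vbar l, (H (φ t)) (v i t)⟫ * ⟪vbar l, v j t⟫
            + ∑ l, ⟪vbar l, (H (φ t)) (v j t)⟫ * ⟪vbar l, v i t⟫) := by
        simpa only [hf'def, hVdef] using
          nphisd_id1 γ (H (φ t)) (hHsym (φ t)) (fun p => v p t) vbar i j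
      rw [hid, abs_mul, abs_of_pos hγ]
      have e1 : |(⟪v i t, (H (φ t)) (v i t)⟫ + ⟪v j t, (H (φ t)) (v j t)⟫)
            * (⟪v i t, v j t⟫ - (if i = j then 1 else 0))| ≤ (D + D) * N := by
        rw [abs_mul]
        refine mul_le_mul ?_ (hyb i j) (abs_nonneg _) (by linarith)
        exact (abs_add_le _ _).trans (add_le_add (hbD t htI i i) (hbD t htI j j))
      have e2 := hsum_b i j
      have e3 := hsum_b j i
      have e4 := hsum_c i j
      have e5 := hsum_c j i
      have habs : ∀ x1 s2 s3 s4 s5 : ℝ,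
          |x1 + 2 * s2 + 2 * s3 + s4 + s5|
            ≤ |x1| + 2 * |s2| + 2 * |s3| + |s4| + |s5| := by
        intro x1 s2 s3 s4 s5
        calc |x1 + 2 * s2 + 2 * s3 + s4 + s5|
            ≤ |x1 + 2 * s2 + 2 * s3 + s4| + |s5| := abs_add_le _ _
          _ ≤ (|x1 + 2 * s2 + 2 * s3| + |s4|) + |s5| :=
              add_le_add (abs_add_le _ _) le_rfl
          _ ≤ ((|x1 + 2 * s2| + |2 * s3|) + |s4|) + |s5| :=
              add_le_add (add_le_add (abs_add_le _ _) le_rfl) le_rfl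
          _ ≤ (((|x1| + |2 * s2|) + |2 * s3|) + |s4|) + |s5| :=
              add_le_add (add_le_add (add_le_add (abs_add_le _ _) le_rfl) le_rfl) le_rfl
          _ = |x1| + 2 * |s2| + 2 * |s3| + |s4| + |s5| := by
              rw [abs_mul, abs_mul, abs_two]
      calc γ * |_| ≤ γ * ((D + D) * N + 2 * ((k:ℝ) * (D * N)) + 2 * ((k:ℝ) * (D * N))
              + (ln:ℝ) * (D * N) + (ln:ℝ) * (D * N)) := by
            refine mul_le_mul_of_nonneg_left ?_ hγ.le
            refine (habs _ _ _ _ _).trans ?_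
            linarith [e1, e2, e3, e4, e5]
        _ = K * N := by rw [hKdef, hDdef]; ring
    · rw [pi_norm_le_iff_of_nonneg hKN]
      intro i
      rw [pi_norm_le_iff_of_nonneg hKN]
      intro l
      rw [Real.norm_eq_abs]
      have hid : (f' t).2 i l =
          γ * (⟪v i t, (H (φ t)) (v i t)⟫ * ⟪v i t, vbar l⟫
            + 2 * ∑ p ∈ Finset.univ.filter (fun p => p < i),
                ⟪v p t, (H (φ t)) (v i t)⟫ * ⟪v p t, vbar l⟫) := by
        simpa only [hf'def, hVdef] using
          nphisd_id2 γ (H (φ t)) (fun p => v p t) vbar hvbar i l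
      rw [hid, abs_mul, abs_of_pos hγ]
      have e1 : |⟪v i t, (H (φ t)) (v i t)⟫ * ⟪v i t, vbar l⟫| ≤ D * N := by
        rw [abs_mul]
        exact mul_le_mul (hbD t htI i i) (hzb i l) (abs_nonneg _) hD0
      have e2 := hsum_bz i l
      have habs2 : ∀ x1 s2 : ℝ, |x1 + 2 * s2| ≤ |x1| + 2 * |s2| := by
        intro x1 s2
        refine (abs_add_le _ _).trans ?_
        rw [abs_mul, abs_two]
      have hk0 : (0:ℝ) ≤ (k:ℝ) := Nat.cast_nonneg k
      have hln0 : (0:ℝ) ≤ (ln:ℝ) := Nat.cast_nonneg ln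
      calc γ * |_| ≤ γ * (D * N + 2 * ((k:ℝ) * (D * N))) := by
            refine mul_le_mul_of_nonneg_left ?_ hγ.le
            refine (habs2 _ _).trans ?_
            linarith [e1, e2]
        _ ≤ K * N := by
            rw [hKdef]
            nlinarith [mul_nonneg hk0 (mul_nonneg hγ.le hDN0),
              mul_nonneg hln0 (mul_nonneg hγ.le hDN0), mul_nonneg hγ.le hDN0]
  have hmain := norm_le_gronwallBound_of_norm_deriv_right_le hfc hfd hf0 hbound
  have hfT : f T = 0 := by
    have h := hmain T ⟨hT, le_rfl⟩
    rw [sub_zero, gronwallBound_ε0_δ0] at h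
    exact norm_le_zero_iff.1 h
  constructor
  · intro i j
    have h := congrArg (fun p => p.1 i j) hfT
    simp only [hfdef, Prod.fst, Prod.snd] at h
    have : ⟪v i T, v j T⟫ - (if i = j then 1 else 0) = 0 := h
    linarith [this]
  · intro i l
    have h := congrArg (fun p => p.2 i l) hfT
    exact h
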